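/- Let V be a real vector space, S ⊆ (V*)ᵏ a subspace and Λ♯ : S → V a linear map satisfying: (i) ᾱ(Λ♯(ᾱ)) = 0 for all ᾱ ∈ S, and (ii) if ᾱ(Λ♯(β̄)) = 0 for all β̄ ∈ S then Λ♯(ᾱ) = 0. Then the ℝᵏ-valued bilinear form ω̄ on W = Λ♯(S) defined by ω̄(Λ♯(ᾱ), Λ♯(β̄)) = ᾱ(Λ♯(β̄)) is well defined (independent of the chosen preimages), skew-symmetric, and nondegenerate in the sense that if ω̄(u,v) = 0 for all v ∈ W then u = 0. -/
import Mathlib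


/-- the ℝᵏ-valued bilinear form ω̄(Λ♯ᾱ, Λ♯β̄) := ᾱ(Λ♯β̄) on W = Λ♯(S) is
well defined, skew-symmetric and nondegenerate. -/
theorem stmt_3 (V : Type*) [AddCommGroup V] [Module ℝ V] (k : ℕ)
    (S : Submodule ℝ (Fin k → Module.Dual ℝ V)) (Λ : S →ₗ[ℝ] V)
    (h1 : ∀ α : S, ∀ A, (α : Fin k → Module.Dual ℝ V) A (Λ α) = 0)
    (h2 : ∀ α : S, (∀ β : S, ∀ A, (α : Fin k → Module.Dual ℝ V) A (Λ β) = 0) → Λ α = 0) :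
    -- well definedness: the value ᾱ(Λ♯β̄) only depends on Λ♯ᾱ and Λ♯β̄
    (∀ α α' β β' : S, Λ α = Λ α' → Λ β = Λ β' → ∀ A,
      (α : Fin k → Module.Dual ℝ V) A (Λ β) = (α' : Fin k → Module.Dual ℝ V) A (Λ β')) ∧
    -- skew-symmetry: ω̄(u,v) = -ω̄(v,u)
    (∀ α β : S, ∀ A, (α : Fin k → Module.Dual ℝ V) A (Λ β)
      = - (β : Fin k → Module.Dual ℝ V) A (Λ α)) ∧
    -- nondegeneracy on W: if ω̄(u,v) = 0 for all v ∈ W then u = 0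
    (∀ α : S, (∀ β : S, ∀ A, (α : Fin k → Module.Dual ℝ V) A (Λ β) = 0) → Λ α = 0) := by
  have skew : ∀ α β : S, ∀ A, (α : Fin k → Module.Dual ℝ V) A (Λ β)
      = - (β : Fin k → Module.Dual ℝ V) A (Λ α) := by
    intro α β A
    have h := h1 (α + β) A
    simp only [map_add, Submodule.coe_add, Pi.add_apply, LinearMap.add_apply,
      h1 α A, h1 β A] at h
    have hab : (α : Fin k → Module.Dual ℝ V) A (Λ β)
        + (β : Fin k → Module.Dual ℝ V) A (Λ α) = 0 := by linarith
    linarith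
  refine ⟨?_, skew, h2⟩
  intro α α' β β' hα hβ A
  have h3 : ((α - α' : S) : Fin k → Module.Dual ℝ V) A (Λ β) = 0 := by
    rw [skew (α - α') β A]
    rw [neg_eq_zero, map_sub Λ, hα, sub_self, map_zero]
  have := h3
  simp only [Submodule.coe_sub, Pi.sub_apply, LinearMap.sub_apply, sub_eq_zero] at this
  rw [this, hβ]
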